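/- arXiv:math/0010226 — 5 statements merged into one kernel-verified Lean document; each statement's English description precedes it below -/
import Mathlib

section
/- Let A be a commutative ring, n ≥ 3, and let φ: Um_n(A) → G be a map to an abelian group satisfying MS1 (invariance under right multiplication by elementary matrices) and MS4 (φ(f²,a_2,...,a_n)·φ(g,a_2,...,a_n) = φ(f²g,a_2,...,a_n) whenever all rows involved are unimodular). Then φ satisfies MS3 (φ(x,a)·φ(y,a) = φ(xy,a) whenever x+y=1) if and only if φ satisfies MS5 (φ(r,a)·φ(1+q,a) = φ(q,a) whenever r(1+q) ≡ q mod (a_2,...,a_n)). -/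
open Matrix

/-- A row is unimodular if its entries generate the unit ideal. -/
def Unim {A : Type*} [CommRing A] {ι : Type*} (v : ι → A) : Prop :=
  Ideal.span (Set.range v) = ⊤

/-- The subgroup of elementary matrices, realized as the multiplicative closure of the
set of transvections (elementary matrices `e_ij(c)`, `i ≠ j`); since the inverse of a
transvection is a transvection, this closure coincides with the elementary group. -/
def ElemMats (ι : Type*) (A : Type*) [Fintype ι] [DecidableEq ι] [CommRing A] :
    Submonoid (Matrix ι ι A) :=
  Submonoid.closure {M | ∃ i j c, i ≠ j ∧ M = Matrix.transvection i j c}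

section Aux

variable {A : Type*} [CommRing A] {n : ℕ}

/-- The quotient map `A → A / (a_2, ..., a_n)`. -/
def QM (a : Fin n → A) : A →+* A ⧸ Ideal.span (Set.range a) :=
  Ideal.Quotient.mk _

lemma QM_eq_zero_iff {a : Fin n → A} {z : A} :
    QM a z = 0 ↔ z ∈ Ideal.span (Set.range a) :=
  Ideal.Quotient.eq_zero_iff_mem

lemma QM_eq_iff {a : Fin n → A} {z w : A} :
    QM a z = QM a w ↔ z - w ∈ Ideal.span (Set.range a) :=
  Ideal.Quotient.mk_eq_mk_iff_sub_mem z w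

lemma QM_surj (a : Fin n → A) : Function.Surjective (QM a) :=
  Ideal.Quotient.mk_surjective

lemma vecMul_cons_transvection (x c : A) (a : Fin n → A) (i : Fin n) :
    Matrix.vecMul (Fin.cons x a) (Matrix.transvection i.succ (0 : Fin (n+1)) c)
      = Fin.cons (x + a i * c) a := by
  funext k
  rw [Matrix.transvection, Matrix.vecMul_add, Matrix.vecMul_one]
  rcases Fin.eq_zero_or_eq_succ k with hk | ⟨j, hk⟩ <;> subst hk
  · simp [Matrix.vecMul, dotProduct, Matrix.single, Fin.sum_univ_succ,
      Fin.succ_ne_zero]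
  · simp [Matrix.vecMul, dotProduct, Matrix.single, Fin.sum_univ_succ,
      (Fin.succ_ne_zero j).symm]

lemma unim_cons_iff (x : A) (a : Fin n → A) :
    Unim (Fin.cons x a) ↔ IsUnit (QM a x) := by
  constructor
  · intro h
    have h1 : (1 : A) ∈ Ideal.span {x} ⊔ Ideal.span (Set.range a) := by
      rw [← Ideal.span_insert, ← Fin.range_cons x a, h]; trivial
    obtain ⟨p, hp, t, ht, hpt⟩ := Submodule.mem_sup.mp h1
    obtain ⟨u, hu⟩ := Ideal.mem_span_singleton'.mp hp
    refine IsUnit.of_mul_eq_one (QM a u) ?_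
    rw [← _root_.map_mul, ← _root_.map_one (QM a), QM_eq_iff]
    have hxt : x * u - 1 = -t := by rw [← hpt, ← hu]; ring
    rw [hxt]
    exact neg_mem ht
  · intro h
    obtain ⟨v, hv⟩ := h
    obtain ⟨u, hu⟩ := QM_surj a (↑v⁻¹ : A ⧸ Ideal.span (Set.range a))
    have hx0 : QM a (x * u - 1) = 0 := by
      rw [_root_.map_sub, _root_.map_mul, hu, ← hv, _root_.map_one]
      simp
    have hxI : x * u - 1 ∈ Ideal.span (Set.range a) := QM_eq_zero_iff.mp hx0
    unfold Unim
    rw [Fin.range_cons, Ideal.span_insert, Ideal.eq_top_iff_one]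
    have h1 : (1 : A) = x * u - (x * u - 1) := by ring
    rw [h1]
    exact Submodule.sub_mem _
      (Ideal.mem_sup_left (Ideal.mem_span_singleton'.mpr ⟨u, mul_comm u x⟩))
      (Ideal.mem_sup_right hxI)

set_option linter.unusedSectionVars false

variable {G : Type*} [CommGroup G] (φ : (Fin (n + 1) → A) → G)

lemma phi_step
    (hMS1 : ∀ v : Fin (n + 1) → A, Unim v → ∀ ε ∈ ElemMats (Fin (n + 1)) A,
      φ (Matrix.vecMul v ε) = φ v)
    (a : Fin n → A) (x c : A) (i : Fin n) (hx : Unim (Fin.cons x a)) :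
    φ (Fin.cons (x + a i * c) a) = φ (Fin.cons x a) := by
  have hmem : Matrix.transvection i.succ (0 : Fin (n+1)) c ∈ ElemMats (Fin (n+1)) A :=
    Submonoid.subset_closure ⟨i.succ, 0, c, Fin.succ_ne_zero i, rfl⟩
  have := hMS1 (Fin.cons x a) hx _ hmem
  rwa [vecMul_cons_transvection] at this

lemma phi_shift
    (hMS1 : ∀ v : Fin (n + 1) → A, Unim v → ∀ ε ∈ ElemMats (Fin (n + 1)) A,
      φ (Matrix.vecMul v ε) = φ v)
    (a : Fin n → A) (x t : A) (ht : t ∈ Ideal.span (Set.range a))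
    (hx : Unim (Fin.cons x a)) :
    φ (Fin.cons (x + t) a) = φ (Fin.cons x a) := by
  classical
  obtain ⟨c, hc⟩ := Ideal.mem_span_range_iff_exists_fun.mp ht
  subst hc
  have key : ∀ s : Finset (Fin n), ∀ y : A, Unim (Fin.cons y a) →
      φ (Fin.cons (y + ∑ i ∈ s, c i * a i) a) = φ (Fin.cons y a) := by
    intro s
    induction s using Finset.induction_on with
    | empty => intro y _; simp
    | insert _ _ his ih =>
      rename_i i s
      intro y hy
      have hsum : y + ∑ j ∈ insert i s, c j * a j
          = (y + ∑ j ∈ s, c j * a j) + a i * c i := by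
        rw [Finset.sum_insert his]; ring
      have hmem : (∑ j ∈ s, c j * a j) ∈ Ideal.span (Set.range a) :=
        Ideal.sum_mem _ fun j _ =>
          Ideal.mul_mem_left _ _ (Ideal.subset_span ⟨j, rfl⟩)
      have hy' : Unim (Fin.cons (y + ∑ j ∈ s, c j * a j) a) := by
        rw [unim_cons_iff] at hy ⊢
        rwa [_root_.map_add, QM_eq_zero_iff.mpr hmem, add_zero]
      rw [hsum, phi_step φ hMS1 a _ (c i) i hy', ih y hy]
  exact key Finset.univ x hx

lemma phi_congr
    (hMS1 : ∀ v : Fin (n + 1) → A, Unim v → ∀ ε ∈ ElemMats (Fin (n + 1)) A,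
      φ (Matrix.vecMul v ε) = φ v)
    (a : Fin n → A) {x x' : A} (h : QM a x = QM a x') (hx : Unim (Fin.cons x a)) :
    φ (Fin.cons x a) = φ (Fin.cons x' a) := by
  have ht : x' - x ∈ Ideal.span (Set.range a) := QM_eq_iff.mp h.symm
  have := phi_shift φ hMS1 a x (x' - x) ht hx
  rw [show x + (x' - x) = x' by ring] at this
  exact this.symm

end Aux

/-- for a map `φ` on unimodular rows of length `n ≥ 3` with values in an
abelian group satisfying MS1 and MS4, relations MS3 and MS5 are equivalent. -/
theorem stmt1 {A G : Type*} [CommRing A] [CommGroup G] {n : ℕ} (hn : 3 ≤ n + 1)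
    (φ : (Fin (n + 1) → A) → G)
    (hMS1 : ∀ v : Fin (n + 1) → A, Unim v → ∀ ε ∈ ElemMats (Fin (n + 1)) A,
      φ (Matrix.vecMul v ε) = φ v)
    (hMS4 : ∀ (f g : A) (a : Fin n → A), Unim (Fin.cons (f ^ 2) a) → Unim (Fin.cons g a) →
      Unim (Fin.cons (f ^ 2 * g) a) →
      φ (Fin.cons (f ^ 2) a) * φ (Fin.cons g a) = φ (Fin.cons (f ^ 2 * g) a)) :
    (∀ (x y : A) (a : Fin n → A), x + y = 1 →
        Unim (Fin.cons x a) → Unim (Fin.cons y a) → Unim (Fin.cons (x * y) a) →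
        φ (Fin.cons x a) * φ (Fin.cons y a) = φ (Fin.cons (x * y) a)) ↔
    (∀ (r q : A) (a : Fin n → A),
        Unim (Fin.cons r a) → Unim (Fin.cons (1 + q) a) → Unim (Fin.cons q a) →
        r * (1 + q) - q ∈ Ideal.span (Set.range a) →
        φ (Fin.cons r a) * φ (Fin.cons (1 + q) a) = φ (Fin.cons q a)) := by
  constructor
  · -- MS3 ⇒ MS5
    intro h3 r q a hr hs hq hmod
    have hu : IsUnit (QM a (1 + q)) := (unim_cons_iff _ _).mp hs
    have uq : IsUnit (QM a q) := (unim_cons_iff _ _).mp hq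
    obtain ⟨v, hv⟩ := id hu
    obtain ⟨s', hs'⟩ := QM_surj a (↑v⁻¹ : A ⧸ Ideal.span (Set.range a))
    have h1 : QM a s' * QM a (1 + q) = 1 := by
      rw [hs', ← hv]; exact_mod_cast v.inv_mul
    have us' : IsUnit (QM a s') := IsUnit.of_mul_eq_one _ h1
    have hπr : QM a r * QM a (1 + q) = QM a q := by
      rw [← _root_.map_mul]; exact QM_eq_iff.mpr hmod
    have hrq : QM a r = QM a s' * QM a q := by
      calc QM a r = QM a r * (QM a s' * QM a (1 + q)) := by rw [h1, mul_one]
        _ = QM a s' * (QM a r * QM a (1 + q)) := by ring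
        _ = QM a s' * QM a q := by rw [hπr]
    have key : QM a (1 - s') = QM a s' * QM a q := by
      have h1' : QM a s' * (1 + QM a q) = 1 := by
        rw [show (1 : A ⧸ Ideal.span (Set.range a)) + QM a q = QM a (1 + q) by
          rw [_root_.map_add, _root_.map_one], h1]
      rw [_root_.map_sub, _root_.map_one]
      linear_combination -h1'
    -- Unimodularity facts
    have hU_s' : Unim (Fin.cons s' a) := (unim_cons_iff _ _).mpr us'
    have hU_y : Unim (Fin.cons (1 - s') a) := by
      rw [unim_cons_iff, key]; exact us'.mul uq
    have hU_p : Unim (Fin.cons (s' * (1 - s')) a) := by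
      rw [unim_cons_iff, _root_.map_mul, key]; exact us'.mul (us'.mul uq)
    have hU_sq : Unim (Fin.cons (s' ^ 2) a) := by
      rw [unim_cons_iff, _root_.map_pow]; exact us'.pow 2
    have hU_sqq : Unim (Fin.cons (s' ^ 2 * q) a) := by
      rw [unim_cons_iff, _root_.map_mul, _root_.map_pow]; exact (us'.pow 2).mul uq
    have hU_sqs : Unim (Fin.cons (s' ^ 2 * (1 + q)) a) := by
      rw [unim_cons_iff, _root_.map_mul, _root_.map_pow]; exact (us'.pow 2).mul hu
    -- MS3 application
    have e3 : φ (Fin.cons s' a) * φ (Fin.cons (1 - s') a)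
        = φ (Fin.cons (s' * (1 - s')) a) :=
      h3 s' (1 - s') a (by ring) hU_s' hU_y hU_p
    have c1 : φ (Fin.cons (s' * (1 - s')) a) = φ (Fin.cons (s' ^ 2 * q) a) := by
      refine phi_congr φ hMS1 a ?_ hU_p
      rw [_root_.map_mul, key, _root_.map_mul, _root_.map_pow]; ring
    have e4 : φ (Fin.cons (s' ^ 2) a) * φ (Fin.cons q a)
        = φ (Fin.cons (s' ^ 2 * q) a) := hMS4 s' q a hU_sq hq hU_sqq
    have e5 : φ (Fin.cons (s' ^ 2) a) * φ (Fin.cons (1 + q) a) = φ (Fin.cons s' a) := by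
      rw [hMS4 s' (1 + q) a hU_sq hs hU_sqs]
      refine phi_congr φ hMS1 a ?_ hU_sqs
      rw [_root_.map_mul, _root_.map_pow]
      linear_combination (QM a s') * h1
    have cr : φ (Fin.cons r a) = φ (Fin.cons (1 - s') a) := by
      refine phi_congr φ hMS1 a ?_ hr
      rw [key]; exact hrq
    rw [cr]
    have main : φ (Fin.cons s' a) * (φ (Fin.cons (1 - s') a) * φ (Fin.cons (1 + q) a))
        = φ (Fin.cons s' a) * φ (Fin.cons q a) := by
      calc φ (Fin.cons s' a) * (φ (Fin.cons (1 - s') a) * φ (Fin.cons (1 + q) a))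
          = (φ (Fin.cons s' a) * φ (Fin.cons (1 - s') a)) * φ (Fin.cons (1 + q) a) := by
            rw [mul_assoc]
        _ = φ (Fin.cons (s' ^ 2 * q) a) * φ (Fin.cons (1 + q) a) := by rw [e3, c1]
        _ = (φ (Fin.cons (s' ^ 2) a) * φ (Fin.cons q a)) * φ (Fin.cons (1 + q) a) := by
            rw [e4]
        _ = (φ (Fin.cons (s' ^ 2) a) * φ (Fin.cons (1 + q) a)) * φ (Fin.cons q a) := by
            rw [mul_right_comm]
        _ = φ (Fin.cons s' a) * φ (Fin.cons q a) := by rw [e5]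
    exact mul_left_cancel main
  · -- MS5 ⇒ MS3
    intro h5 x y a hxy hUx hUy hUxy
    have ux : IsUnit (QM a x) := (unim_cons_iff _ _).mp hUx
    have uy : IsUnit (QM a y) := (unim_cons_iff _ _).mp hUy
    obtain ⟨v, hv⟩ := id ux
    obtain ⟨x', hx'⟩ := QM_surj a (↑v⁻¹ : A ⧸ Ideal.span (Set.range a))
    have h1 : QM a x * QM a x' = 1 := by
      rw [hx', ← hv]; exact_mod_cast v.mul_inv
    have ux' : IsUnit (QM a x') := IsUnit.of_mul_eq_one _ (by rw [mul_comm]; exact h1)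
    have hπy : QM a y = 1 - QM a x := by
      rw [show (1 : A ⧸ Ideal.span (Set.range a)) = QM a 1 by rw [_root_.map_one],
        ← hxy, _root_.map_add]
      ring
    have key2 : QM a (x' - 1) = QM a x' * QM a y := by
      rw [_root_.map_sub, _root_.map_one, hπy]
      linear_combination h1
    have uq' : IsUnit (QM a (x' - 1)) := by rw [key2]; exact ux'.mul uy
    have hU1q : Unim (Fin.cons (1 + (x' - 1)) a) := by
      rw [unim_cons_iff, show (1 : A) + (x' - 1) = x' by ring]; exact ux'
    have hUq : Unim (Fin.cons (x' - 1) a) := (unim_cons_iff _ _).mpr uq'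
    have hmod : y * (1 + (x' - 1)) - (x' - 1) ∈ Ideal.span (Set.range a) := by
      rw [← QM_eq_zero_iff, _root_.map_sub, _root_.map_mul, _root_.map_add,
        _root_.map_sub, _root_.map_one, hπy]
      linear_combination -h1
    have e3 : φ (Fin.cons y a) * φ (Fin.cons (1 + (x' - 1)) a)
        = φ (Fin.cons (x' - 1) a) := h5 y (x' - 1) a hUy hU1q hUq hmod
    rw [show (1 : A) + (x' - 1) = x' by ring] at e3 hU1q
    have hU_x2 : Unim (Fin.cons (x ^ 2) a) := by
      rw [unim_cons_iff, _root_.map_pow]; exact ux.pow 2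
    have hU_x2x' : Unim (Fin.cons (x ^ 2 * x') a) := by
      rw [unim_cons_iff, _root_.map_mul, _root_.map_pow]; exact (ux.pow 2).mul ux'
    have hU_x2q : Unim (Fin.cons (x ^ 2 * (x' - 1)) a) := by
      rw [unim_cons_iff, _root_.map_mul, _root_.map_pow]; exact (ux.pow 2).mul uq'
    have e5 : φ (Fin.cons (x ^ 2) a) * φ (Fin.cons x' a) = φ (Fin.cons x a) := by
      rw [hMS4 x x' a hU_x2 hU1q hU_x2x']
      refine phi_congr φ hMS1 a ?_ hU_x2x'
      rw [_root_.map_mul, _root_.map_pow]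
      linear_combination (QM a x) * h1
    have e4 : φ (Fin.cons (x ^ 2) a) * φ (Fin.cons (x' - 1) a)
        = φ (Fin.cons (x * y) a) := by
      rw [hMS4 x (x' - 1) a hU_x2 hUq hU_x2q]
      refine phi_congr φ hMS1 a ?_ hU_x2q
      rw [_root_.map_mul (QM a) (x ^ 2), key2, _root_.map_mul (QM a) x,
        _root_.map_pow]
      linear_combination (QM a x) * (QM a y) * h1
    calc φ (Fin.cons x a) * φ (Fin.cons y a)
        = (φ (Fin.cons (x ^ 2) a) * φ (Fin.cons x' a)) * φ (Fin.cons y a) := by rw [e5]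
      _ = φ (Fin.cons (x ^ 2) a) * (φ (Fin.cons y a) * φ (Fin.cons x' a)) := by
          rw [mul_assoc, mul_comm (φ (Fin.cons x' a))]
      _ = φ (Fin.cons (x ^ 2) a) * φ (Fin.cons (x' - 1) a) := by rw [e3]
      _ = φ (Fin.cons (x * y) a) := e4
end

section
/- Let A be a commutative ring and n even. Then every unimodular row v ∈ Um_n(A) is the first row of a unimodular 2×n matrix over A. Concretely, if (b_1,...,b_n) is such that Σ a_i b_i = 1 for v = (a_1,...,a_n), then the 2×n matrix with first row (a_1,...,a_n) and second row (-b_2, b_1, -b_4, b_3, ..., -b_n, b_{n-1}) is unimodular. -/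
open Matrix

set_option maxHeartbeats 1000000 in

/-- Bass: for even length `n = 2m`, a unimodular row `a` with
`∑ aᵢbᵢ = 1` is the first row of the unimodular `2 × n` matrix whose second row is
`(-b₂, b₁, -b₄, b₃, …, -bₙ, b_{n-1})` (indices written 1-based; here 0-based:
entry `2k` is `-b (2k+1)` and entry `2k+1` is `b (2k)`). -/
theorem stmt4 {A : Type*} [CommRing A] {m : ℕ} (hm : 0 < m)
    (a b : Fin (2 * m) → A) (hab : ∑ i, a i * b i = 1) :
    ∃ N : Matrix (Fin (2 * m)) (Fin 2) A,
      (Matrix.of fun i : Fin 2 => fun j : Fin (2 * m) =>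
        if i = 0 then a j
        else if h : (j : ℕ) % 2 = 0 then
          -b ⟨(j : ℕ) + 1, by have := j.isLt; omega⟩
        else
          b ⟨(j : ℕ) - 1, by have := j.isLt; omega⟩) * N = 1 := by
  refine ⟨Matrix.of fun (j : Fin (2*m)) (i : Fin 2) =>
    if i = 0 then b j
    else if h : (j : ℕ) % 2 = 0 then
      -a ⟨(j : ℕ) + 1, by have := j.isLt; omega⟩
    else
      a ⟨(j : ℕ) - 1, by have := j.isLt; omega⟩, ?_⟩
  have key : ∀ f : Fin (2*m) → A, ∑ j, f j =
      ∑ k : Fin m, (f ⟨2*k, by omega⟩ + f ⟨2*k+1, by omega⟩) := by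
    intro f
    rw [← Equiv.sum_comp (finProdFinEquiv.trans (finCongr (mul_comm m 2))) f,
      Fintype.sum_prod_type]
    refine Finset.sum_congr rfl fun k _ => ?_
    rw [Fin.sum_univ_two]
    congr 1 <;> · congr 1; ext; simp [finProdFinEquiv]; try omega
  ext i j
  fin_cases i <;> fin_cases j <;>
    simp only [Matrix.mul_apply, Matrix.of_apply, Matrix.one_apply] <;>
    simp only [Fin.isValue, if_true, if_false, Fin.zero_eta, Fin.mk_one, ite_true, ite_false,
      reduceIte, Fin.ext_iff, Fin.val_zero, Fin.val_one]
  · exact hab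
  · norm_num
    rw [key]
    refine Finset.sum_eq_zero fun k _ => ?_
    rw [dif_pos (by omega : (2*(k:ℕ)) % 2 = 0), dif_neg (by omega : ¬ (2*(k:ℕ)+1) % 2 = 0)]
    simp only [Nat.add_sub_cancel]
    ring
  · norm_num
    rw [key]
    refine Finset.sum_eq_zero fun k _ => ?_
    rw [dif_pos (by omega : (2*(k:ℕ)) % 2 = 0), dif_neg (by omega : ¬ (2*(k:ℕ)+1) % 2 = 0)]
    simp only [Nat.add_sub_cancel]
    ring
  · norm_num
    rw [key]
    have h2 : ∑ k : Fin m, (a ⟨2*(k:ℕ), by omega⟩ * b ⟨2*(k:ℕ), by omega⟩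
        + a ⟨2*(k:ℕ)+1, by omega⟩ * b ⟨2*(k:ℕ)+1, by omega⟩) = 1 := by
      rw [← key fun i => a i * b i]; exact hab
    refine Eq.trans (Finset.sum_congr rfl fun k _ => ?_) h2
    rw [dif_pos (by omega : (2*(k:ℕ)) % 2 = 0), dif_pos (by omega : (2*(k:ℕ)) % 2 = 0),
      dif_neg (by omega : ¬ (2*(k:ℕ)+1) % 2 = 0), dif_neg (by omega : ¬ (2*(k:ℕ)+1) % 2 = 0)]
    simp only [neg_neg, Nat.add_sub_cancel]
    rw [add_comm]
    congr 1 <;> rw [mul_comm] <;> congr 1 <;> exact congrArg _ (Fin.ext (by simp))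
end

section
/- Let A be a commutative ring, m < n, T ∈ GL_m(A), and M ∈ Um_{m,n}(A) a unimodular m×n matrix with right inverse N. Then TM = M(I_n + N(T - I_m)M), and the matrices I_n + N(T-I_m)M and T ⊥ I_{n-m} (block sum) lie in the same coset of E_{m+n}(A) inside GL_{m+n}(A) when stably embedded; in particular TM and M(T ⊥ I_{n-m}) are in the same orbit under GL_n(A) ∩ E_{m+n}(A) acting by right multiplication. -/
open Matrix

namespace Stmt5Aux

variable {A : Type*} [CommRing A] {p q : Type*} [Fintype p] [Fintype q]
  [DecidableEq p] [DecidableEq q]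

lemma e12_mul (X Y : Matrix p q A) :
    fromBlocks (1 : Matrix p p A) X 0 (1 : Matrix q q A) *
      fromBlocks (1 : Matrix p p A) Y 0 (1 : Matrix q q A) =
      fromBlocks (1 : Matrix p p A) (X + Y) 0 (1 : Matrix q q A) := by
  simp [fromBlocks_multiply, add_comm]

lemma e21_mul (X Y : Matrix q p A) :
    fromBlocks (1 : Matrix p p A) 0 X (1 : Matrix q q A) *
      fromBlocks (1 : Matrix p p A) 0 Y (1 : Matrix q q A) =
      fromBlocks (1 : Matrix p p A) 0 (X + Y) (1 : Matrix q q A) := by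
  simp [fromBlocks_multiply, add_comm]

lemma e12_std (i : p) (j : q) (c : A) :
    fromBlocks (1 : Matrix p p A) (Matrix.single i j c) 0 (1 : Matrix q q A) =
      transvection (Sum.inl i) (Sum.inr j) c := by
  ext a b
  rcases a with a | a <;> rcases b with b | b <;>
    simp [transvection, Matrix.single, fromBlocks, one_apply, Matrix.add_apply, and_comm]

lemma e21_std (i : q) (j : p) (c : A) :
    fromBlocks (1 : Matrix p p A) 0 (Matrix.single i j c) (1 : Matrix q q A) =
      transvection (Sum.inr i) (Sum.inl j) c := by
  ext a b
  rcases a with a | a <;> rcases b with b | b <;>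
    simp [transvection, Matrix.single, fromBlocks, one_apply, Matrix.add_apply, and_comm]

lemma e12_mem (X : Matrix p q A) :
    fromBlocks (1 : Matrix p p A) X 0 (1 : Matrix q q A) ∈ ElemMats (p ⊕ q) A := by
  have key : ∀ S : Finset (p × q),
      fromBlocks (1 : Matrix p p A) (∑ ij ∈ S, Matrix.single ij.1 ij.2 (X ij.1 ij.2)) 0
        (1 : Matrix q q A) ∈ ElemMats (p ⊕ q) A := by
    intro S
    induction S using Finset.induction_on with
    | empty => simpa using one_mem _
    | @insert _ _ h ih =>
        rw [Finset.sum_insert h, ← e12_mul]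
        exact mul_mem (Submonoid.subset_closure
          ⟨Sum.inl _, Sum.inr _, _, by simp, e12_std _ _ _⟩) ih
  have hX : X = ∑ ij : p × q, Matrix.single ij.1 ij.2 (X ij.1 ij.2) := by
    rw [Fintype.sum_prod_type]; exact matrix_eq_sum_single X
  have := key Finset.univ
  rwa [← hX] at this

lemma e21_mem (X : Matrix q p A) :
    fromBlocks (1 : Matrix p p A) 0 X (1 : Matrix q q A) ∈ ElemMats (p ⊕ q) A := by
  have key : ∀ S : Finset (q × p),
      fromBlocks (1 : Matrix p p A) 0 (∑ ij ∈ S, Matrix.single ij.1 ij.2 (X ij.1 ij.2))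
        (1 : Matrix q q A) ∈ ElemMats (p ⊕ q) A := by
    intro S
    induction S using Finset.induction_on with
    | empty => simpa using one_mem _
    | @insert _ _ h ih =>
        rw [Finset.sum_insert h, ← e21_mul]
        exact mul_mem (Submonoid.subset_closure
          ⟨Sum.inr _, Sum.inl _, _, by simp, e21_std _ _ _⟩) ih
  have hX : X = ∑ ij : q × p, Matrix.single ij.1 ij.2 (X ij.1 ij.2) := by
    rw [Fintype.sum_prod_type]; exact matrix_eq_sum_single X
  have := key Finset.univ
  rwa [← hX] at this

/-- Vaserstein's lemma: if `1 + βα` is invertible with inverse `v'`, then the block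
diagonal matrix `(1 + αβ) ⊥ v'` is a product of elementary matrices. -/
lemma vaserstein (α : Matrix p q A) (β : Matrix q p A) (v' : Matrix q q A)
    (hv : (1 + β * α) * v' = 1) (hv' : v' * (1 + β * α) = 1) :
    fromBlocks (1 + α * β) 0 0 v' ∈ ElemMats (p ⊕ q) A := by
  have h1 : (1 + α * β) * (α * v') = α := by
    have step : (1 + α * β) * (α * v') = α * ((1 + β * α) * v') := by
      simp only [Matrix.mul_add, Matrix.add_mul, Matrix.one_mul, Matrix.mul_one, Matrix.mul_assoc]
    rw [step, hv, Matrix.mul_one]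
  have h2 : (1 : Matrix q q A) - β * (α * v') = v' := by
    rw [← hv]
    simp only [Matrix.mul_add, Matrix.add_mul, Matrix.one_mul, Matrix.mul_one, Matrix.mul_assoc]
    abel
  have h3 : β - v' * ((1 + β * α) * β) = 0 := by
    rw [← Matrix.mul_assoc, hv', Matrix.one_mul, sub_self]
  have key : fromBlocks (1 + α * β) 0 0 v' =
      fromBlocks 1 α 0 1 * fromBlocks 1 0 β 1 * fromBlocks 1 (-(α * v')) 0 1 *
        fromBlocks 1 0 (-((1 + β * α) * β)) 1 := by
    have s1 : fromBlocks (1 : Matrix p p A) α 0 1 * fromBlocks 1 0 β (1 : Matrix q q A) =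
        fromBlocks (1 + α * β) α β 1 := by
      simp [fromBlocks_multiply]
    have s2 : fromBlocks (1 + α * β) α β (1 : Matrix q q A) *
        fromBlocks 1 (-(α * v')) 0 (1 : Matrix q q A) = fromBlocks (1 + α * β) 0 β v' := by
      rw [fromBlocks_multiply, fromBlocks_inj]
      refine ⟨by simp, ?_, by simp, ?_⟩
      · rw [Matrix.mul_neg, h1]; simp
      · rw [Matrix.mul_neg, Matrix.one_mul, ← sub_eq_neg_add, h2]
    have s3 : fromBlocks (1 + α * β) 0 β v' *
        fromBlocks 1 0 (-((1 + β * α) * β)) (1 : Matrix q q A) =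
        fromBlocks (1 + α * β) 0 0 v' := by
      rw [fromBlocks_multiply, fromBlocks_inj]
      refine ⟨by simp, by simp, ?_, by simp⟩
      rw [Matrix.mul_neg, Matrix.mul_one, ← sub_eq_add_neg, h3]
    rw [s1, s2, s3]
  rw [key]
  exact mul_mem (mul_mem (mul_mem (e12_mem α) (e21_mem β)) (e12_mem _)) (e21_mem _)

lemma vaserstein_unit (α : Matrix p q A) (β : Matrix q p A) (v' : Matrix q q A)
    (hv : (1 + β * α) * v' = 1) (hv' : v' * (1 + β * α) = 1) :
    IsUnit (1 + α * β) := by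
  have hβαv' : β * (α * v') = 1 - v' := by
    rw [← hv]
    simp only [Matrix.mul_add, Matrix.add_mul, Matrix.one_mul, Matrix.mul_one, Matrix.mul_assoc]
    abel
  have hv'βα : v' * (β * α) = 1 - v' := by
    rw [← hv']
    simp only [Matrix.mul_add, Matrix.add_mul, Matrix.one_mul, Matrix.mul_one, Matrix.mul_assoc]
    abel
  refine ⟨⟨1 + α * β, 1 - α * (v' * β), ?_, ?_⟩, rfl⟩
  · have step : (1 + α * β) * (1 - α * (v' * β))
        = 1 + α * β - α * (v' * β) - α * (β * (α * (v' * β))) := by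
      simp only [Matrix.mul_sub, Matrix.sub_mul, Matrix.mul_add, Matrix.add_mul, Matrix.one_mul,
        Matrix.mul_one, Matrix.mul_assoc]
      abel
    rw [step]
    have : β * (α * (v' * β)) = (1 - v') * β := by
      rw [← Matrix.mul_assoc, ← Matrix.mul_assoc, Matrix.mul_assoc β α v', hβαv']
    rw [this]
    simp only [Matrix.mul_sub, Matrix.sub_mul, Matrix.mul_add, Matrix.add_mul, Matrix.one_mul,
      Matrix.mul_one, Matrix.mul_assoc]
    abel
  · have step : (1 - α * (v' * β)) * (1 + α * β)
        = 1 + α * β - α * (v' * β) - α * (v' * (β * (α * β))) := by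
      simp only [Matrix.mul_sub, Matrix.sub_mul, Matrix.mul_add, Matrix.add_mul, Matrix.one_mul,
        Matrix.mul_one, Matrix.mul_assoc]
      abel
    rw [step]
    have : v' * (β * (α * β)) = (1 - v') * β := by
      rw [← Matrix.mul_assoc, ← Matrix.mul_assoc, Matrix.mul_assoc v' β α, hv'βα]
    rw [this]
    simp only [Matrix.mul_sub, Matrix.sub_mul, Matrix.mul_add, Matrix.add_mul, Matrix.one_mul,
      Matrix.mul_one, Matrix.mul_assoc]
    abel

end Stmt5Aux

/-- for `T ∈ GL_m(A)` and a unimodular `m × n` matrix `M` with right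
inverse `N` (columns indexed by `Fin m ⊕ Fin k`, `n = m + k`), one has
`T M = M (Iₙ + N (T - I) M)`; stably, `Iₙ + N(T-I)M` and `T ⊥ I_{n-m}` lie in the same
coset of `E_{m+n}(A)`; in particular `TM` and `M (T ⊥ I_{n-m})` are in the same orbit
under `GLₙ(A) ∩ E_{m+n}(A)` acting by right multiplication. -/
theorem stmt5 {A : Type*} [CommRing A] {m k : ℕ}
    (M : Matrix (Fin m) (Fin m ⊕ Fin k) A) (N : Matrix (Fin m ⊕ Fin k) (Fin m) A)
    (hMN : M * N = 1) (T : Matrix (Fin m) (Fin m) A) (hT : IsUnit T) :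
    T * M = M * (1 + N * (T - 1) * M) ∧
    (∃ ε ∈ ElemMats ((Fin m ⊕ Fin k) ⊕ Fin m) A,
      Matrix.fromBlocks (1 + N * (T - 1) * M) 0 0 (1 : Matrix (Fin m) (Fin m) A) =
        Matrix.fromBlocks
          (Matrix.fromBlocks T 0 0 (1 : Matrix (Fin k) (Fin k) A)) 0 0
          (1 : Matrix (Fin m) (Fin m) A) * ε) ∧
    (∃ g : Matrix (Fin m ⊕ Fin k) (Fin m ⊕ Fin k) A, IsUnit g ∧
      Matrix.fromBlocks g 0 0 (1 : Matrix (Fin m) (Fin m) A) ∈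
        ElemMats ((Fin m ⊕ Fin k) ⊕ Fin m) A ∧
      T * M = M * Matrix.fromBlocks T 0 0 (1 : Matrix (Fin k) (Fin k) A) * g) := by
  classical
  obtain ⟨Tu, rfl⟩ := hT
  set T : Matrix (Fin m) (Fin m) A := (Tu : Matrix (Fin m) (Fin m) A) with hTdef
  set Ti : Matrix (Fin m) (Fin m) A := ((Tu⁻¹ : (Matrix (Fin m) (Fin m) A)ˣ) :
    Matrix (Fin m) (Fin m) A) with hTidef
  have hTTi : T * Ti = 1 := Tu.mul_inv
  have hTiT : Ti * T = 1 := Tu.inv_mul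
  -- the matrix u = 1 + N (T-1) M
  set u : Matrix (Fin m ⊕ Fin k) (Fin m ⊕ Fin k) A := 1 + N * ((T - 1) * M) with hudef
  have hA : N * (T - 1) * M = N * ((T - 1) * M) := Matrix.mul_assoc _ _ _
  -- part 1
  have h1 : T * M = M * (1 + N * (T - 1) * M) := by
    have hexp : M * (1 + N * (T - 1) * M) = M + M * N * ((T - 1) * M) := by
      simp only [Matrix.mul_add, Matrix.mul_one, Matrix.mul_assoc]
    rw [hexp, hMN, Matrix.one_mul, Matrix.sub_mul, Matrix.one_mul]
    abel
  refine ⟨h1, ?_⟩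
  -- Vaserstein application 1 : fromBlocks u 0 0 Ti ∈ E
  have e1 : (1 : Matrix (Fin m) (Fin m) A) + (T - 1) * M * N = T := by
    rw [Matrix.mul_assoc, hMN, Matrix.mul_one]; abel
  have hv1 : (1 + (T - 1) * M * N) * Ti = 1 := by rw [e1]; exact hTTi
  have hv1' : Ti * (1 + (T - 1) * M * N) = 1 := by rw [e1]; exact hTiT
  have app1 : fromBlocks u 0 0 Ti ∈ ElemMats ((Fin m ⊕ Fin k) ⊕ Fin m) A := by
    have := Stmt5Aux.vaserstein N ((T - 1) * M) Ti hv1 hv1'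
    rwa [← hudef] at this
  have hu_unit : IsUnit u := by
    have := Stmt5Aux.vaserstein_unit N ((T - 1) * M) Ti hv1 hv1'
    rwa [← hudef] at this
  -- Vaserstein application 2 : fromBlocks (Ti ⊥ 1) 0 0 T ∈ E
  set α₂ : Matrix (Fin m ⊕ Fin k) (Fin m) A := fromRows (Ti - 1) (0 : Matrix (Fin k) (Fin m) A)
    with hα₂
  set β₂ : Matrix (Fin m) (Fin m ⊕ Fin k) A := fromCols (1 : Matrix (Fin m) (Fin m) A) 0
    with hβ₂
  have hβα₂ : β₂ * α₂ = Ti - 1 := by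
    rw [hα₂, hβ₂, fromCols_mul_fromRows]; simp
  have e2 : (1 : Matrix (Fin m) (Fin m) A) + β₂ * α₂ = Ti := by rw [hβα₂]; abel
  have hv2 : (1 + β₂ * α₂) * T = 1 := by rw [e2]; exact hTiT
  have hv2' : T * (1 + β₂ * α₂) = 1 := by rw [e2]; exact hTTi
  have hαβ₂ : (1 : Matrix (Fin m ⊕ Fin k) (Fin m ⊕ Fin k) A) + α₂ * β₂ =
      fromBlocks Ti 0 0 (1 : Matrix (Fin k) (Fin k) A) := by
    rw [hα₂, hβ₂, fromRows_mul_fromCols, ← fromBlocks_one, fromBlocks_add, fromBlocks_inj]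
    refine ⟨by rw [Matrix.mul_one]; abel, by simp, by simp, by simp⟩
  have app2 : fromBlocks (fromBlocks Ti 0 0 (1 : Matrix (Fin k) (Fin k) A)) 0 0 T ∈
      ElemMats ((Fin m ⊕ Fin k) ⊕ Fin m) A := by
    have := Stmt5Aux.vaserstein α₂ β₂ T hv2 hv2'
    rwa [hαβ₂] at this
  -- the elementary matrix ε
  set ε : Matrix ((Fin m ⊕ Fin k) ⊕ Fin m) ((Fin m ⊕ Fin k) ⊕ Fin m) A :=
    fromBlocks (fromBlocks Ti 0 0 (1 : Matrix (Fin k) (Fin k) A)) 0 0 T *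
      fromBlocks u 0 0 Ti with hεdef
  have hε : ε ∈ ElemMats ((Fin m ⊕ Fin k) ⊕ Fin m) A := mul_mem app2 app1
  have hεeq : ε = fromBlocks (fromBlocks Ti 0 0 (1 : Matrix (Fin k) (Fin k) A) * u) 0 0 1 := by
    rw [hεdef, fromBlocks_multiply]
    simp [hTTi]
  have hTT1 : fromBlocks T 0 0 (1 : Matrix (Fin k) (Fin k) A) *
      fromBlocks Ti 0 0 (1 : Matrix (Fin k) (Fin k) A) = 1 := by
    rw [fromBlocks_multiply]
    simp [hTTi, fromBlocks_one]
  constructor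
  · refine ⟨ε, hε, ?_⟩
    rw [hεeq, fromBlocks_multiply, hA, ← hudef, fromBlocks_inj]
    refine ⟨?_, by simp, by simp, by simp⟩
    rw [Matrix.mul_zero, add_zero, ← Matrix.mul_assoc, hTT1, Matrix.one_mul]
  · refine ⟨fromBlocks Ti 0 0 (1 : Matrix (Fin k) (Fin k) A) * u, ?_, ?_, ?_⟩
    · refine IsUnit.mul ?_ hu_unit
      exact ⟨⟨fromBlocks Ti 0 0 (1 : Matrix (Fin k) (Fin k) A),
        fromBlocks T 0 0 (1 : Matrix (Fin k) (Fin k) A),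
        by rw [fromBlocks_multiply]; simp [hTiT, fromBlocks_one],
        by rw [fromBlocks_multiply]; simp [hTTi, fromBlocks_one]⟩, rfl⟩
    · rw [← hεeq]; exact hε
    · rw [Matrix.mul_assoc M, ← Matrix.mul_assoc (fromBlocks T 0 0 _), hTT1, Matrix.one_mul]
      show T * M = M * (1 + N * ((T - 1) * M))
      rw [← hA]
      exact h1
end

section
/- Let k be a field, let X be a trace-zero 2×2 matrix over k, Y a 2×2 matrix, and Z a 2×(n-4) matrix over k, such that the 2×n matrix (X | Y | Z) and the 2×n matrix (I-X | Y | Z) both have rank 2. Then the 2×n matrix (X(I-X) | (I-X)Y + YX | Z) also has rank 2. -/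
open Matrix

namespace Stmt7Aux

variable {k : Type*} [Field k]

/-- column space -/
noncomputable def R {n : Type*} [Fintype n] (A : Matrix (Fin 2) n k) :
    Submodule k (Fin 2 → k) := LinearMap.range A.mulVecLin

lemma rank_eq_two_iff {n : Type*} [Fintype n] (A : Matrix (Fin 2) n k) :
    A.rank = 2 ↔ R A = ⊤ := by
  constructor
  · intro h
    apply Submodule.eq_top_of_finrank_eq
    rw [Module.finrank_fin_fun]
    exact h
  · intro h
    rw [Matrix.rank, show LinearMap.range A.mulVecLin = ⊤ from h, finrank_top,
      Module.finrank_fin_fun]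

lemma R_fromColumns {n₁ n₂ : Type*} [Fintype n₁] [Fintype n₂]
    (A : Matrix (Fin 2) n₁ k) (B : Matrix (Fin 2) n₂ k) :
    R (Matrix.fromCols A B) = R A ⊔ R B := by
  apply le_antisymm
  · rintro x ⟨v, rfl⟩
    have : Matrix.fromCols A B *ᵥ v
        = A *ᵥ (v ∘ Sum.inl) + B *ᵥ (v ∘ Sum.inr) := by
      conv_lhs => rw [← Sum.elim_comp_inl_inr v]
      exact Matrix.fromCols_mulVec_sumElim A B _ _
    rw [Matrix.mulVecLin_apply, this]
    exact Submodule.add_mem_sup ⟨_, rfl⟩ ⟨_, rfl⟩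
  · rw [sup_le_iff]
    constructor
    · rintro x ⟨v, rfl⟩
      refine ⟨Sum.elim v 0, ?_⟩
      simp [Matrix.mulVecLin_apply]
    · rintro x ⟨v, rfl⟩
      refine ⟨Sum.elim 0 v, ?_⟩
      simp [Matrix.mulVecLin_apply]

lemma R_mul_le (A B : Matrix (Fin 2) (Fin 2) k) : R (A * B) ≤ R A := by
  rw [R, Matrix.mulVecLin_mul]
  exact LinearMap.range_comp_le_range _ _

lemma isUnit_of_right_inv {A B : Matrix (Fin 2) (Fin 2) k} (h : A * B = 1) :
    IsUnit A := by
  have := congrArg Matrix.det h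
  rw [Matrix.det_mul, Matrix.det_one] at this
  exact (Matrix.isUnit_iff_isUnit_det A).mpr (IsUnit.of_mul_eq_one _ this)

lemma R_mul_unit (A B : Matrix (Fin 2) (Fin 2) k) (hB : IsUnit B) :
    R (A * B) = R A := by
  rw [R, Matrix.mulVecLin_mul, LinearMap.range_comp,
    LinearMap.range_eq_top.mpr (Matrix.mulVec_surjective_iff_isUnit.mpr hB),
    Submodule.map_top]
  rfl

lemma R_add_le (A B : Matrix (Fin 2) (Fin 2) k) : R (A + B) ≤ R A ⊔ R B := by
  rintro x ⟨v, rfl⟩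
  rw [Matrix.mulVecLin_apply, Matrix.add_mulVec]
  exact Submodule.add_mem_sup ⟨_, rfl⟩ ⟨_, rfl⟩

lemma R_neg (A : Matrix (Fin 2) (Fin 2) k) : R (-A) = R A := by
  rw [R, R]
  have : (-A).mulVecLin = -A.mulVecLin := by ext v; simp [Matrix.neg_mulVec]
  rw [this, LinearMap.range_neg]

lemma sq_eq (X : Matrix (Fin 2) (Fin 2) k) (hX : X.trace = 0) :
    X * X = (-X.det) • 1 := by
  have h : X 1 1 = -X 0 0 := by
    rw [Matrix.trace_fin_two] at hX; linear_combination hX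
  ext i j
  fin_cases i <;> fin_cases j <;>
    simp [Matrix.mul_apply, Fin.sum_univ_two, Matrix.det_fin_two,
      Matrix.one_apply, h] <;> ring

lemma det_one_sub (X : Matrix (Fin 2) (Fin 2) k) (hX : X.trace = 0) :
    (1 - X).det = 1 + X.det := by
  rw [Matrix.trace_fin_two] at hX
  simp [Matrix.det_fin_two, Matrix.one_apply]
  linear_combination -hX

end Stmt7Aux

open Stmt7Aux

/-- over a field, if the `2 × n` block matrices `(X | Y | Z)` and
`(I - X | Y | Z)` both have rank 2, where `X` is a trace-zero `2 × 2` matrix, then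
`(X(I-X) | (I-X)Y + YX | Z)` also has rank 2. -/
theorem stmt7 {k : Type*} [Field k] {m : ℕ}
    (X Y : Matrix (Fin 2) (Fin 2) k) (Z : Matrix (Fin 2) (Fin m) k)
    (hX : X.trace = 0)
    (h1 : (Matrix.fromCols X (Matrix.fromCols Y Z)).rank = 2)
    (h2 : (Matrix.fromCols (1 - X) (Matrix.fromCols Y Z)).rank = 2) :
    (Matrix.fromCols (X * (1 - X))
      (Matrix.fromCols ((1 - X) * Y + Y * X) Z)).rank = 2 := by
  rw [rank_eq_two_iff, R_fromColumns, R_fromColumns] at *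
  by_cases hdet : X.det * (1 - X).det ≠ 0
  · have hu : IsUnit (X * (1 - X)) := by
      rw [Matrix.isUnit_iff_isUnit_det, Matrix.det_mul]
      exact isUnit_iff_ne_zero.mpr hdet
    have htop : R (X * (1 - X)) = ⊤ := by
      rw [R, LinearMap.range_eq_top]
      exact Matrix.mulVec_surjective_iff_isUnit.mpr hu
    rw [eq_top_iff]
    exact le_trans (by rw [htop]) le_sup_left
  · push_neg at hdet
    rcases mul_eq_zero.mp hdet with h0 | h0
    · -- det X = 0, so X² = 0
      have hsq : X * X = 0 := by rw [sq_eq X hX, h0]; simp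
      have hX1 : X * (1 - X) = X := by rw [mul_sub, hsq, mul_one, sub_zero]
      have hUnit : IsUnit (1 + X) := by
        apply isUnit_of_right_inv (B := 1 - X)
        have h' : (1 + X) * (1 - X) = 1 - X * X := by noncomm_ring
        rw [h', hsq, sub_zero]
      have hW : R (Y * (1 + X)) = R Y := R_mul_unit Y _ hUnit
      have key : R X ⊔ R ((1 - X) * Y + Y * X) = R X ⊔ R Y := by
        apply le_antisymm
        · apply sup_le le_sup_left
          have h' : (1 - X) * Y + Y * X = Y * (1 + X) + (-X) * Y := by noncomm_ring
          rw [h']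
          refine le_trans (R_add_le _ _) (sup_le ?_ ?_)
          · rw [hW]; exact le_sup_right
          · refine le_trans (R_mul_le _ _) ?_
            rw [R_neg]
            exact le_sup_left
        · apply sup_le le_sup_left
          rw [← hW]
          have hY1 : Y * (1 + X) = ((1 - X) * Y + Y * X) + X * Y := by noncomm_ring
          rw [hY1]
          refine le_trans (R_add_le _ _) (sup_le le_sup_right ?_)
          exact le_trans (R_mul_le _ _) le_sup_left
      rw [hX1, ← sup_assoc, key, sup_assoc, h1]
    · -- det (1 - X) = 0, so det X = -1, X² = 1
      have hd : X.det = -1 := by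
        have h' := det_one_sub X hX; rw [h0] at h'; linear_combination -h'
      have hsq : X * X = 1 := by rw [sq_eq X hX, hd]; simp
      have hX1 : X * (1 - X) = -(1 - X) := by
        rw [mul_sub, hsq, mul_one]; abel
      have hXu : IsUnit X := isUnit_of_right_inv hsq
      have hW : R (Y * X) = R Y := R_mul_unit Y _ hXu
      have key : R (1 - X) ⊔ R ((1 - X) * Y + Y * X) = R (1 - X) ⊔ R Y := by
        apply le_antisymm
        · apply sup_le le_sup_left
          refine le_trans (R_add_le _ _) (sup_le ?_ ?_)
          · exact le_trans (R_mul_le _ _) le_sup_left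
          · rw [hW]; exact le_sup_right
        · apply sup_le le_sup_left
          rw [← hW]
          have h' : Y * X = ((1 - X) * Y + Y * X) + (-(1 - X)) * Y := by
            rw [neg_mul]; abel
          refine le_trans (le_of_eq (congrArg R h')) ?_
          refine le_trans (R_add_le _ _) (sup_le le_sup_right
            (le_trans (R_mul_le _ _) ?_))
          rw [R_neg]
          exact le_sup_left
      rw [hX1, R_neg, ← sup_assoc, key, sup_assoc, h2]
end

section
/- Let A be a commutative noetherian ring of Krull dimension d ≤ 2n-5, n ≥ 4. If [T] = [M] * [N] in the sense of the partially defined operation (representatives (X|Y|Z), (I-X|Y|Z), (X(I-X)|(I-X)Y+YX|Z) with X trace-zero 2×2), then Row_1([T]) = Row_1([M]) · Row_1([N]) in the group Um_n(A)/E_n(A). -/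
open Matrix

section Helpers

set_option linter.unusedSectionVars false

variable {A : Type*} [CommRing A] {ι : Type*} [Fintype ι] [DecidableEq ι]

theorem stmt18.vecMul_transvection (v : ι → A) {i j : ι} (hij : i ≠ j) (c : A) :
    Matrix.vecMul v (Matrix.transvection i j c) = Function.update v j (v j + v i * c) := by
  funext k
  simp only [Matrix.transvection, Matrix.vecMul_add, Matrix.vecMul_one, Pi.add_apply]
  rw [Function.update_apply]
  by_cases hk : k = j
  · subst hk
    simp [Matrix.vecMul, dotProduct, Matrix.single, Finset.sum_ite_eq, mul_comm]
  · simp [hk, Matrix.vecMul, dotProduct, Matrix.single, Ne.symm hk]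

theorem stmt18.unim_update {v : ι → A} {i j : ι} (hij : i ≠ j) (c : A) (hv : Unim v) :
    Unim (Function.update v j (v j + v i * c)) := by
  set w := Function.update v j (v j + v i * c) with hw
  have h1 : Ideal.span (Set.range v) ≤ Ideal.span (Set.range w) := by
    rw [Ideal.span_le]
    rintro x ⟨k, rfl⟩
    by_cases hk : k = j
    · subst hk
      have hvk : v k = w k - c * w i := by
        simp only [hw, Function.update_self, Function.update_apply, hij, if_false]
        ring
      rw [hvk]
      exact sub_mem (Ideal.subset_span ⟨k, rfl⟩)
        (Ideal.mul_mem_left _ _ (Ideal.subset_span ⟨i, rfl⟩))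
    · have : v k = w k := by simp [hw, Function.update_apply, hk]
      rw [this]; exact Ideal.subset_span ⟨k, rfl⟩
  rw [Unim, eq_top_iff]
  exact le_trans (by rw [← hv]) h1

/-- A single elementary column operation on a row. -/
def EStep (v w : ι → A) : Prop :=
  ∃ i j c, i ≠ j ∧ w = Function.update v j (v j + v i * c)

theorem stmt18.estep_unim {v w : ι → A} (h : EStep v w) (hv : Unim v) : Unim w := by
  obtain ⟨i, j, c, hij, rfl⟩ := h; exact stmt18.unim_update hij c hv

theorem stmt18.echain_unim {v w : ι → A} (h : Relation.ReflTransGen EStep v w)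
    (hv : Unim v) : Unim w := by
  induction h with
  | refl => exact hv
  | tail _ hstep ih => exact stmt18.estep_unim hstep ih

theorem stmt18.echain_wms {G : Type*} [CommGroup G] (wms : (ι → A) → G)
    (hMS1 : ∀ v : ι → A, Unim v → ∀ ε ∈ ElemMats ι A, wms (Matrix.vecMul v ε) = wms v)
    {v w : ι → A} (h : Relation.ReflTransGen EStep v w) (hv : Unim v) : wms w = wms v := by
  induction h with
  | refl => rfl
  | tail hchain hstep ih =>
    obtain ⟨i, j, c, hij, rfl⟩ := hstep
    rw [← stmt18.vecMul_transvection _ hij c,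
      hMS1 _ (stmt18.echain_unim hchain hv) _
        (Submonoid.subset_closure ⟨i, j, c, hij, rfl⟩), ih]

theorem stmt18.chain_tail {u v : ι → A} (h : Relation.ReflTransGen EStep u v)
    (i : ι) {j : ι} (hij : i ≠ j) (c : A) :
    Relation.ReflTransGen EStep u (Function.update v j (v j + v i * c)) :=
  h.tail ⟨i, j, c, hij, rfl⟩

theorem stmt18.unim_row {n : ℕ} {κ : Type*} [Fintype κ] {M : Matrix (Fin n) κ A}
    {M' : Matrix κ (Fin n) A} (h : M * M' = 1) (i : Fin n) : Unim (M i) := by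
  rw [Unim, Ideal.eq_top_iff_one]
  have h1 : ∑ j, M i j * M' j i = 1 := by
    have := congrFun (congrFun h i) i
    simpa [Matrix.mul_apply] using this
  rw [← h1]
  exact Ideal.sum_mem _ fun j _ =>
    Ideal.mul_mem_right _ _ (Ideal.subset_span ⟨j, rfl⟩)

end Helpers

/-- `A` commutative noetherian of Krull dimension `d ≤ 2n - 5`,
`n = m + 4 ≥ 4` (columns indexed by `Fin 2 ⊕ (Fin 2 ⊕ Fin m)`), `wms` the weak
Mennicke symbol on rows (satisfying MS1 and MS3, taken at the first coordinate).
If `[T] = [M] * [N]`, i.e. `M, N, T` have the representative shapes `(X | Y | Z)`,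
`(I - X | Y | Z)` and `(X(I-X) | (I-X)Y + YX | Z)` with `X` trace-zero `2 × 2`
and all three matrices unimodular, then
`Row₁([T]) = Row₁([M]) · Row₁([N])` in `Um_n(A)/E_n(A)`. -/
theorem stmt18 {A G : Type*} [CommRing A] [IsNoetherianRing A] [CommGroup G] {d m : ℕ}
    (hd : ringKrullDim A ≤ d) (hd2 : 2 ≤ d) (hdn : d + 5 ≤ 2 * (m + 4))
    (wms : ((Fin 2 ⊕ (Fin 2 ⊕ Fin m)) → A) → G)
    (hMS1 : ∀ v : (Fin 2 ⊕ (Fin 2 ⊕ Fin m)) → A, Unim v →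
      ∀ ε ∈ ElemMats (Fin 2 ⊕ (Fin 2 ⊕ Fin m)) A, wms (Matrix.vecMul v ε) = wms v)
    (hMS3 : ∀ (x y : A) (a : (Fin 2 ⊕ (Fin 2 ⊕ Fin m)) → A), x + y = 1 →
      Unim (Function.update a (Sum.inl 0) x) → Unim (Function.update a (Sum.inl 0) y) →
      wms (Function.update a (Sum.inl 0) (x * y)) =
        wms (Function.update a (Sum.inl 0) x) * wms (Function.update a (Sum.inl 0) y))
    (X Y : Matrix (Fin 2) (Fin 2) A) (Z : Matrix (Fin 2) (Fin m) A)
    (hX : X.trace = 0)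
    (hM : ∃ M' : Matrix (Fin 2 ⊕ (Fin 2 ⊕ Fin m)) (Fin 2) A,
      Matrix.fromCols X (Matrix.fromCols Y Z) * M' = 1)
    (hN : ∃ N' : Matrix (Fin 2 ⊕ (Fin 2 ⊕ Fin m)) (Fin 2) A,
      Matrix.fromCols (1 - X) (Matrix.fromCols Y Z) * N' = 1)
    (hT : ∃ T' : Matrix (Fin 2 ⊕ (Fin 2 ⊕ Fin m)) (Fin 2) A,
      Matrix.fromCols (X * (1 - X))
        (Matrix.fromCols ((1 - X) * Y + Y * X) Z) * T' = 1) :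
    wms (Matrix.fromCols (X * (1 - X))
        (Matrix.fromCols ((1 - X) * Y + Y * X) Z) 0) =
      wms (Matrix.fromCols X (Matrix.fromCols Y Z) 0) *
      wms (Matrix.fromCols (1 - X) (Matrix.fromCols Y Z) 0) := by
  classical
  obtain ⟨M', hM⟩ := hM
  obtain ⟨N', hN⟩ := hN
  obtain ⟨T', hT⟩ := hT
  have hX11 : X 1 1 = -X 0 0 := by
    have h := hX
    simp [Matrix.trace, Fin.sum_univ_two, Matrix.diag] at h
    linear_combination h
  -- coordinates
  set e0 : Fin 2 ⊕ (Fin 2 ⊕ Fin m) := Sum.inl 0 with he0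
  set e1 : Fin 2 ⊕ (Fin 2 ⊕ Fin m) := Sum.inl 1 with he1
  set f0 : Fin 2 ⊕ (Fin 2 ⊕ Fin m) := Sum.inr (Sum.inl 0) with hf0
  set f1 : Fin 2 ⊕ (Fin 2 ⊕ Fin m) := Sum.inr (Sum.inl 1) with hf1
  have ne_e1f1 : e1 ≠ f1 := by simp [he1, hf1]
  have ne_f1e1 : f1 ≠ e1 := by simp [he1, hf1]
  have ne_f1f0 : f1 ≠ f0 := by simp [hf1, hf0]
  have ne_e1f0 : e1 ≠ f0 := by simp [he1, hf0]
  have ne_e0f1 : e0 ≠ f1 := by simp [he0, hf1]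
  have ne_e1e0 : e1 ≠ e0 := by simp [he1, he0]
  -- the common tail
  set g : (Fin 2 ⊕ (Fin 2 ⊕ Fin m)) → A :=
    Sum.elim ![(0 : A), -(X 0 1)]
      (Sum.elim ![Y 0 0 + X 1 0 * Y 0 1 - Y 1 0 * X 0 1,
        -(Y 0 1) + 2 * X 0 0 * Y 0 1 - (Y 0 0 - Y 1 1) * X 0 1] (Z 0)) with hg
  -- the three rows
  set rowM := Matrix.fromCols X (Matrix.fromCols Y Z) 0 with hrowM
  set rowN := Matrix.fromCols (1 - X) (Matrix.fromCols Y Z) 0 with hrowN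
  set rowT := Matrix.fromCols (X * (1 - X))
      (Matrix.fromCols ((1 - X) * Y + Y * X) Z) 0 with hrowT
  have umM : Unim rowM := stmt18.unim_row hM 0
  have umN : Unim rowN := stmt18.unim_row hN 0
  have umT : Unim rowT := stmt18.unim_row hT 0
  -- chain for M
  have chM : Relation.ReflTransGen EStep rowM (Function.update g e0 (X 0 0)) := by
    have t0 : Relation.ReflTransGen EStep rowM rowM := .refl
    have t1 := stmt18.chain_tail t0 e1 ne_e1f1 (1 : A)
    have t2 := stmt18.chain_tail t1 f1 ne_f1e1 (-1 : A)
    have t3 := stmt18.chain_tail t2 e1 ne_e1f1 (1 : A)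
    have t4 := stmt18.chain_tail t3 e1 ne_e1f1 (1 : A)
    have t5 := stmt18.chain_tail t4 f1 ne_f1e1 (-1 : A)
    have t6 := stmt18.chain_tail t5 e1 ne_e1f1 (1 : A)
    have t7 := stmt18.chain_tail t6 f1 ne_f1f0 (-(X 1 0))
    have t8 := stmt18.chain_tail t7 e1 ne_e1f0 (Y 1 0)
    have t9 := stmt18.chain_tail t8 e0 ne_e0f1 (2 * Y 0 1)
    have t10 := stmt18.chain_tail t9 e1 ne_e1f1 (Y 0 0 - Y 1 1)
    convert t10 using 1
    funext k
    rcases k with i | i | zk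
    · fin_cases i <;>
        simp [Function.update_apply, hg, hrowM, he0, he1, hf0, hf1,
          Matrix.fromCols_apply_inl, Matrix.fromCols_apply_inr] <;> ring
    · fin_cases i <;>
        simp [Function.update_apply, hg, hrowM, he0, he1, hf0, hf1,
          Matrix.fromCols_apply_inl, Matrix.fromCols_apply_inr] <;> ring
    · simp [Function.update_apply, hg, hrowM, he0, he1, hf0, hf1,
        Matrix.fromCols_apply_inl, Matrix.fromCols_apply_inr]
  -- chain for N
  have chN : Relation.ReflTransGen EStep rowN (Function.update g e0 (1 - X 0 0)) := by
    have t0 : Relation.ReflTransGen EStep rowN rowN := .refl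
    have t1 := stmt18.chain_tail t0 f1 ne_f1f0 (X 1 0)
    have t2 := stmt18.chain_tail t1 e1 ne_e1f0 (Y 1 0)
    have t3 := stmt18.chain_tail t2 e0 ne_e0f1 (-(2 * Y 0 1))
    have t4 := stmt18.chain_tail t3 e1 ne_e1f1 (Y 0 0 - Y 1 1)
    convert t4 using 1
    funext k
    rcases k with i | i | zk
    · fin_cases i <;>
        simp [Function.update_apply, hg, hrowN, he0, he1, hf0, hf1,
          Matrix.fromCols_apply_inl, Matrix.fromCols_apply_inr,
          Matrix.sub_apply, Matrix.one_apply] <;> ring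
    · fin_cases i <;>
        simp [Function.update_apply, hg, hrowN, he0, he1, hf0, hf1,
          Matrix.fromCols_apply_inl, Matrix.fromCols_apply_inr,
          Matrix.sub_apply, Matrix.one_apply] <;> ring
    · simp [Function.update_apply, hg, hrowN, he0, he1, hf0, hf1,
        Matrix.fromCols_apply_inl, Matrix.fromCols_apply_inr]
  -- chain for T
  have chT : Relation.ReflTransGen EStep rowT
      (Function.update g e0 (X 0 0 * (1 - X 0 0))) := by
    have t0 : Relation.ReflTransGen EStep rowT rowT := .refl
    have t1 := stmt18.chain_tail t0 e1 ne_e1f1 (1 : A)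
    have t2 := stmt18.chain_tail t1 f1 ne_f1e1 (-1 : A)
    have t3 := stmt18.chain_tail t2 e1 ne_e1f1 (1 : A)
    have t4 := stmt18.chain_tail t3 e1 ne_e1f1 (1 : A)
    have t5 := stmt18.chain_tail t4 f1 ne_f1e1 (-1 : A)
    have t6 := stmt18.chain_tail t5 e1 ne_e1f1 (1 : A)
    have t7 := stmt18.chain_tail t6 e1 ne_e1e0 (-(X 1 0))
    convert t7 using 1
    funext k
    rcases k with i | i | zk
    · fin_cases i <;>
        simp [Function.update_apply, hg, hrowT, he0, he1, hf0, hf1,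
          Matrix.fromCols_apply_inl, Matrix.fromCols_apply_inr,
          Matrix.mul_apply, Matrix.add_apply, Matrix.sub_apply, Matrix.one_apply,
          Fin.sum_univ_two, hX11] <;> ring
    · fin_cases i <;>
        simp [Function.update_apply, hg, hrowT, he0, he1, hf0, hf1,
          Matrix.fromCols_apply_inl, Matrix.fromCols_apply_inr,
          Matrix.mul_apply, Matrix.add_apply, Matrix.sub_apply, Matrix.one_apply,
          Fin.sum_univ_two, hX11] <;> ring
    · simp [Function.update_apply, hg, hrowT, he0, he1, hf0, hf1,
        Matrix.fromCols_apply_inl, Matrix.fromCols_apply_inr]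
  have hms3 := hMS3 (X 0 0) (1 - X 0 0) g (by ring)
    (stmt18.echain_unim chM umM) (stmt18.echain_unim chN umN)
  calc wms rowT = wms (Function.update g e0 (X 0 0 * (1 - X 0 0))) :=
        (stmt18.echain_wms wms hMS1 chT umT).symm
    _ = wms (Function.update g e0 (X 0 0)) * wms (Function.update g e0 (1 - X 0 0)) := hms3
    _ = wms rowM * wms rowN := by
        rw [stmt18.echain_wms wms hMS1 chM umM, stmt18.echain_wms wms hMS1 chN umN]
end
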